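/- Consider the additive map d : F₂[j] → F₂[j] given by d(f) = f + j·f². The images of the monomials j², j⁴, j⁶, … (all even powers j^{2k} with k ≥ 1) in the cokernel F₂[j]/d(F₂[j]) are linearly independent over F₂. In particular, the cokernel is an infinite-dimensional F₂-vector space. -/

import Mathlib

open Polynomial

namespace Stmt2Aux

local notation "R2" => Polynomial (ZMod 2)

lemma zmod2_sq (a : ZMod 2) : a ^ 2 = a := by revert a; decide

lemma sq_add (p q : R2) : (p + q) ^ 2 = p ^ 2 + q ^ 2 := add_pow_char p q 2

/-- `d` as a linear map. -/
noncomputable def D : R2 →ₗ[ZMod 2] R2 where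
  toFun f := f + X * f ^ 2
  map_add' p q := by rw [sq_add]; ring
  map_smul' c f := by
    have hc : c * c = c := by revert c; decide
    have h2 : (C c) ^ 2 = C c := by rw [← C_pow, zmod2_sq]
    simp only [RingHom.id_apply, smul_eq_C_mul, mul_pow, h2]
    ring

lemma ordCompl_two_two : (2 : ℕ) / 2 ^ (2 : ℕ).factorization 2 = 1 := by
  rw [Nat.Prime.factorization_self (by norm_num)]
  norm_num

lemma ordCompl_step (n : ℕ) : ordCompl[2] (n * 2 + 1 + 1) = ordCompl[2] (n + 1) := by
  have h : n * 2 + 1 + 1 = (n + 1) * 2 := by ring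
  rw [h, Nat.ordCompl_mul, ordCompl_two_two, mul_one]

lemma ordCompl_odd {n : ℕ} (h : ¬ 2 ∣ n) : ordCompl[2] n = n := by
  rw [Nat.factorization_eq_zero_of_not_dvd h, pow_zero, Nat.div_one]

/-- The linear functional summing the coefficients at exponents `n` with odd part of
`n+1` equal to `m`. -/
def phi (m : ℕ) : R2 →ₗ[ZMod 2] ZMod 2 where
  toFun g := g.sum fun n a => if ordCompl[2] (n + 1) = m then a else 0
  map_add' p q := Polynomial.sum_add_index p q _ (fun _ => by simp)
    (fun n a b => by split <;> simp)
  map_smul' c p := by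
    rw [RingHom.id_apply, Polynomial.sum_smul_index p c _ (fun _ => by simp),
      Polynomial.sum_def, Polynomial.sum_def, smul_eq_mul, Finset.mul_sum]
    exact Finset.sum_congr rfl fun n _ => by split <;> simp

lemma phi_monomial (m n : ℕ) (a : ZMod 2) :
    phi m (monomial n a) = if ordCompl[2] (n + 1) = m then a else 0 := by
  simp only [phi, LinearMap.coe_mk, AddHom.coe_mk]
  exact Polynomial.sum_monomial_index a _ (by simp)

lemma phi_shift (m : ℕ) (f : R2) : phi m (X * f ^ 2) = phi m f := by
  induction f using Polynomial.induction_on' with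
  | add p q hp hq =>
      rw [sq_add, mul_add, map_add, map_add, hp, hq]
  | monomial n a =>
      rw [monomial_pow, ← monomial_one_one_eq_X, monomial_mul_monomial, one_mul,
        zmod2_sq, phi_monomial, phi_monomial]
      have h : 1 + n * 2 + 1 = n * 2 + 1 + 1 := by ring
      rw [h, ordCompl_step]

lemma phi_D (m : ℕ) (f : R2) : phi m (D f) = 0 := by
  have : D f = f + X * f ^ 2 := rfl
  rw [this, map_add, phi_shift]
  exact CharTwo.add_self_eq_zero _

lemma phi_pow (m i : ℕ) : phi m (X ^ (2 * (i + 1))) = if 2 * i + 3 = m then 1 else 0 := by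
  rw [← Polynomial.monomial_one_right_eq_X_pow, phi_monomial]
  have h2 : ¬ (2 ∣ (2 * (i + 1) + 1)) := by omega
  rw [ordCompl_odd h2]
  congr 1

lemma span_eq_range :
    Submodule.span (ZMod 2)
      (Set.range (fun f : R2 => f + X * f ^ 2)) = LinearMap.range D := by
  have h : (fun f : R2 => f + X * f ^ 2) = ⇑D := rfl
  rw [h, ← LinearMap.coe_range D, Submodule.span_eq]

end Stmt2Aux

open Stmt2Aux in
/-- The images of the monomials `j^{2k}`, `k ≥ 1`, in the cokernel of the additive map
`d : F₂[j] → F₂[j]`, `d(f) = f + j·f²`, are linearly independent over `F₂`; in particular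
the cokernel is infinite-dimensional. -/
theorem stmt2 :
    LinearIndependent (ZMod 2)
      (fun k : ℕ =>
        (Submodule.Quotient.mk (Polynomial.X ^ (2 * (k + 1))) :
          Polynomial (ZMod 2) ⧸ Submodule.span (ZMod 2)
            (Set.range (fun f : Polynomial (ZMod 2) => f + Polynomial.X * f ^ 2)))) ∧
    ¬ Module.Finite (ZMod 2)
      (Polynomial (ZMod 2) ⧸ Submodule.span (ZMod 2)
        (Set.range (fun f : Polynomial (ZMod 2) => f + Polynomial.X * f ^ 2))) := by
  set N := Submodule.span (ZMod 2)
      (Set.range (fun f : Polynomial (ZMod 2) => f + Polynomial.X * f ^ 2)) with hN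
  have hli : LinearIndependent (ZMod 2)
      (fun k : ℕ => (Submodule.Quotient.mk (Polynomial.X ^ (2 * (k + 1))) :
        Polynomial (ZMod 2) ⧸ N)) := by
    rw [linearIndependent_iff']
    intro s c hsum i his
    have hmk : (Submodule.Quotient.mk (∑ j ∈ s, c j • (X ^ (2 * (j + 1)) : Polynomial (ZMod 2))) :
        Polynomial (ZMod 2) ⧸ N) = 0 := by
      rw [← Submodule.mkQ_apply, map_sum]
      simpa only [map_smul, Submodule.mkQ_apply] using hsum
    have hmem : (∑ j ∈ s, c j • (X ^ (2 * (j + 1)) : Polynomial (ZMod 2))) ∈ N :=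
      (Submodule.Quotient.mk_eq_zero N).mp hmk
    rw [hN, span_eq_range] at hmem
    obtain ⟨f, hf⟩ := hmem
    have h0 : phi (2 * i + 3) (∑ j ∈ s, c j • (X ^ (2 * (j + 1)) : Polynomial (ZMod 2))) = 0 := by
      rw [← hf, phi_D]
    rw [map_sum] at h0
    simp only [map_smul, phi_pow, smul_eq_mul, mul_ite, mul_one, mul_zero] at h0
    have hrw : ∀ j ∈ s, (if 2 * j + 3 = 2 * i + 3 then c j else 0)
        = if i = j then c j else 0 := by
      intro j _
      rcases eq_or_ne i j with h | h
      · subst h; simp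
      · rw [if_neg (by omega), if_neg h]
    rw [Finset.sum_congr rfl hrw, Finset.sum_ite_eq s i c, if_pos his] at h0
    exact h0
  refine ⟨hli, fun hfin => ?_⟩
  exact Module.Finite.not_linearIndependent_of_infinite _ hli
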